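/- arXiv:2005.14397 — 3 statements merged into one kernel-verified Lean document; each statement's English description precedes it below -/
import Mathlib

section
/- Let ξ₁, ξ₂, … be any sequence of distinct real numbers, let T = Q(ξ₁,ξ₂,…) be the corresponding RSK recording tableau, and let m ∈ ℕ. Then for each integer t ≥ m, the bumping route of T in lazy parametrization coincides with the trajectory of the symbol ∞: Box^{lazy}_{T,m}(t) = Pos_∞( P(ξ₁,…,ξ_m, ∞, ξ_{m+1}, …, ξ_t) ), where the right-hand side is the position of the box containing ∞ in the insertion tableau of the sequence ξ₁,…,ξ_m with ∞ inserted at position m+1 followed by ξ_{m+1},…,ξ_t. -/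
open MeasureTheory ProbabilityTheory Filter Topology

noncomputable section

namespace PoissonBump

/-- The row with index `y` of a tableau. -/
def rowOf {α : Type*} (tab : List (List α)) (y : ℕ) : List α := tab.getD y ([] : List α)

/-- Schensted insertion of `a` into a single row: returns the new row and the bumped entry
(`none` if `a` was appended at the end of the row). -/
def rowIns {α : Type*} [LinearOrder α] (r : List α) (a : α) : List α × Option α :=
  match r.findIdx? (fun b => decide (a < b)) with
  | none => (r ++ [a], none)
  | some i => (r.set i a, r[i]?)

/-- Schensted row insertion of `a` into a tableau, given as the list of its rows
(row `0` is the bottom row). -/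
def insertTab {α : Type*} [LinearOrder α] : List (List α) → α → List (List α)
  | [], a => [[a]]
  | r :: rest, a =>
    match rowIns r a with
    | (r', none) => r' :: rest
    | (r', some b) => r' :: insertTab rest b

/-- The RSK insertion tableau `P(w)` of a finite sequence `w`. -/
def insTab {α : Type*} [LinearOrder α] (w : List α) : List (List α) :=
  w.foldl insertTab ([] : List (List α))

/-- The first `n` entries of an infinite sequence. -/
def pref {α : Type*} (w : ℕ → α) (n : ℕ) : List α := (List.range n).map w

/-- The set of boxes `(x, y)` (column, row) of a tableau. -/
def cellsOf {α : Type*} (tab : List (List α)) : Finset (ℕ × ℕ) :=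
  (Finset.range tab.length).biUnion fun y =>
    (Finset.range ((rowOf tab y).length)).image fun x => (x, y)

/-- The entry in column `x`, row `y` of the recording tableau `Q(w)` of an infinite
sequence `w`, i.e. the number of the Schensted insertion step at which the box `(x, y)`
stopped being empty (`⊤` if it stays empty forever). -/
def recTab (w : ℕ → ℝ) (x y : ℕ) : ℕ∞ :=
  sInf {n : ℕ∞ | ∃ k : ℕ, n = (k : ℕ∞) ∧ (x, y) ∈ cellsOf (insTab (pref w k))}

/-- Auxiliary description of the bumping route of the insertion `T ← m + 1/2` into an
infinite tableau `T` (with entries in `ℕ∞`, the value `⊤` marking an empty box):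
`(routeAux T m y).1` is the column of the box of the bumping route in row `y`, and
`(routeAux T m y).2` is the entry of `T` in that box (the value bumped to row `y+1`;
it is `⊤` if that box is empty, in which case the route terminates there). -/
def routeAux (T : ℕ → ℕ → ℕ∞) (m : ℕ) : ℕ → ℕ × ℕ∞
  | 0 =>
    (sInf {x : ℕ | (m : ℕ∞) < T x 0}, T (sInf {x : ℕ | (m : ℕ∞) < T x 0}) 0)
  | y + 1 =>
    (sInf {x : ℕ | (routeAux T m y).2 < T x (y + 1)},
      T (sInf {x : ℕ | (routeAux T m y).2 < T x (y + 1)}) (y + 1))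

/-- The bumping route `T ⤳ m + 1/2` reaches row `y`. -/
def routeDef (T : ℕ → ℕ → ℕ∞) (m y : ℕ) : Prop :=
  ∀ y' < y, (routeAux T m y').2 ≠ ⊤

/-- `Y_x^{[m]}`: the index of the first row in which the bumping route `T ⤳ m + 1/2`
reaches the column with index `x` (or a column to its left); `⊤` if no such row exists. -/
def Yrow (T : ℕ → ℕ → ℕ∞) (m x : ℕ) : ℕ∞ :=
  sInf {n : ℕ∞ | ∃ y : ℕ, n = (y : ℕ∞) ∧ routeDef T m y ∧ (routeAux T m y).1 ≤ x}

/-- The row of the first box of the bumping route `T ⤳ m + 1/2` whose entry in `T`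
exceeds `t` (an empty box, with entry `⊤`, counts). -/
def lazyRow (T : ℕ → ℕ → ℕ∞) (m t : ℕ) : ℕ :=
  sInf {y : ℕ | (t : ℕ∞) < (routeAux T m y).2}

/-- `Box^{lazy}_{T,m}(t)`, the lazy parametrization of the bumping route: the first box
`(x, y)` of the bumping route `T ⤳ m + 1/2` whose entry in `T` is larger than `t`
(or the final box of the route if all entries of `T` on the route are `≤ t`). -/
def lazyBox (T : ℕ → ℕ → ℕ∞) (m t : ℕ) : ℕ × ℕ :=
  ((routeAux T m (lazyRow T m t)).1, lazyRow T m t)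

/-- `T_x^{[m]}`: the time at which the bumping route `T ⤳ m + 1/2` in the lazy
parametrization reaches the column with index `x` (or a column to its left). -/
def Tlazy (T : ℕ → ℕ → ℕ∞) (m x : ℕ) : ℕ∞ :=
  sInf {n : ℕ∞ | ∃ t : ℕ, n = (t : ℕ∞) ∧ m ≤ t ∧ (lazyBox T m t).1 ≤ x}

/-- The sequence `ξ₁, …, ξ_m, ∞, ξ_{m+1}, …, ξ_t` (as a list over `WithTop ℝ`). -/
def wtSeq (w : ℕ → ℝ) (m t : ℕ) : List (WithTop ℝ) :=
  ((List.range m).map fun i => (w i : WithTop ℝ)) ++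
    (⊤ : WithTop ℝ) :: ((List.range (t - m)).map fun j => (w (m + j) : WithTop ℝ))

/-- The position `(x, y)` (column, row) of the box containing `∞ = ⊤` in a tableau. -/
def posTop (tab : List (List (WithTop ℝ))) : ℕ × ℕ :=
  ((sInf {x : ℕ | (rowOf tab (sInf {y : ℕ | (⊤ : WithTop ℝ) ∈ rowOf tab y})).getD x 0 = ⊤}),
    sInf {y : ℕ | (⊤ : WithTop ℝ) ∈ rowOf tab y})

/-- The augmented shape `sh* T` of a tableau containing the entry `∞ = ⊤`: the pair
consisting of the shape of `T` with the `∞`-box removed, and the position of the `∞`-box. -/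
def shStar (tab : List (List (WithTop ℝ))) : Finset (ℕ × ℕ) × ℕ × ℕ :=
  ((cellsOf tab).filter (fun c => (rowOf tab c.2).getD c.1 0 ≠ ⊤), posTop tab)

/-- The augmented Plancherel growth process: `augP w m t = sh* P(w₁,…,w_m,∞,w_{m+1},…,w_t)`. -/
def augP (w : ℕ → ℝ) (m t : ℕ) : Finset (ℕ × ℕ) × ℕ × ℕ :=
  shStar (insTab (wtSeq w m t))

/-- The Plancherel growth process: the shape of the RSK insertion tableau of `w₁, …, w_t`. -/
def shP (w : ℕ → ℝ) (t : ℕ) : Finset (ℕ × ℕ) := cellsOf (insTab (pref w t))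

/-- The common shape of the RSK insertion and recording tableaux of a permutation. -/
def shapeOfPerm {n : ℕ} (π : Equiv.Perm (Fin n)) : Finset (ℕ × ℕ) :=
  cellsOf (insTab (List.ofFn fun i => ((π i : ℕ) : ℝ)))

open scoped Classical in
/-- The Plancherel measure of the Young diagram `s`: the probability that the RSK shape of
a uniformly random permutation of `{1, …, n}` equals `s`. -/
def plancherelProb (n : ℕ) (s : Finset (ℕ × ℕ)) : ℝ :=
  ((Finset.univ.filter fun π : Equiv.Perm (Fin n) => shapeOfPerm π = s).card : ℝ) / n.factorial

/-- The exponential distribution `Exp(1)` on `ℝ`. -/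
def expMeasure : Measure ℝ :=
  volume.withDensity fun u => ENNReal.ofReal (if 0 ≤ u then Real.exp (-u) else 0)

/-- The Erlang distribution `Erlang(l+1, 1)`, with density `u^l e^{-u} / l!` on `ℝ₊`. -/
def erlangMeasure (l : ℕ) : Measure ℝ :=
  volume.withDensity fun u =>
    ENNReal.ofReal (if 0 ≤ u then u ^ l * Real.exp (-u) / l.factorial else 0)

/-- The distribution on `[1, ∞)` with tail `P(R > u) = u^{-(i+1)}` for `u ≥ 1`,
given by its density `(i+1) u^{-(i+2)}`. -/
def ratioMeasure (i : ℕ) : Measure ℝ :=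
  volume.withDensity fun u =>
    ENNReal.ofReal (if 1 ≤ u then ((i : ℝ) + 1) * u ^ (-((i : ℤ) + 2)) else 0)

/-- The Poisson probability mass function with parameter `r`. -/
def poisPMF (r : ℝ) (n : ℕ) : ℝ := Real.exp (-r) * r ^ n / n.factorial

/-- The binomial probability mass function `Binom(k, p)`. -/
def binomPMF (k : ℕ) (p : ℝ) (n : ℕ) : ℝ :=
  if n ≤ k then (k.choose n : ℝ) * p ^ n * (1 - p) ^ (k - n) else 0

/-- The counting process of the point process of partial sums of `ψ₀, ψ₁, …`:
`countN ψ z ω = #{k : ψ₀(ω) + ⋯ + ψ_k(ω) ≤ z}`. -/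
def countN {Ω' : Type*} (ψ : ℕ → Ω' → ℝ) (z : ℝ) (ω : Ω') : ℕ :=
  sInf {n : ℕ | z < ∑ j ∈ Finset.range (n + 1), ψ j ω}

/-- `(s, c)` is an augmented Young diagram: `s` is a Young diagram (a finite lower set)
and `c` is one of its outer corners. -/
def IsAug (s : Finset (ℕ × ℕ)) (c : ℕ × ℕ) : Prop :=
  IsLowerSet (s : Set (ℕ × ℕ)) ∧ c ∉ s ∧ IsLowerSet (insert c (s : Set (ℕ × ℕ)))

open scoped Classical in
/-- The edge relation of the augmented Young graph, on pairs
(cells of the regular part, special box): `b` is obtained from `a` by adding one box to the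
regular part, and the special box of `b` is the outer corner in the row directly above the
special box of `a` if the new box is the special box of `a`, and the special box of `a`
otherwise. -/
def AugEdgeData (a b : Finset (ℕ × ℕ) × ℕ × ℕ) : Prop :=
  IsAug a.1 a.2 ∧ IsAug b.1 b.2 ∧ a.1 ⊆ b.1 ∧ b.1.card = a.1.card + 1 ∧
    (if b.1 = insert a.2 a.1 then b.2.2 = a.2.2 + 1 else b.2 = a.2)

/-- A tableau (a list of rows, bottom row first): nonempty rows of weakly decreasing
lengths, entries strictly increasing along rows and up the columns. -/
def IsTab (tab : List (List (WithTop ℝ))) : Prop :=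
  (∀ r ∈ tab, r ≠ []) ∧
  (∀ r ∈ tab, List.Chain' (· < ·) r) ∧
  List.Chain' (fun r s : List (WithTop ℝ) => s.length ≤ r.length) tab ∧
  (∀ (y x : ℕ) (a b : WithTop ℝ), (rowOf tab y)[x]? = some a →
     (rowOf tab (y + 1))[x]? = some b → a < b)

/-- Stirling numbers of the second kind. -/
def stirling2 : ℕ → ℕ → ℕ
  | 0, 0 => 1
  | 0, _ + 1 => 0
  | _ + 1, 0 => 0
  | n + 1, j + 1 => (j + 1) * stirling2 n (j + 1) + stirling2 n j

/-- The signed combination of Poisson distributions `ν_{k,p,h}` (as a function on `ℕ`). -/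
def nuPMF (k : ℕ) (p h : ℝ) (n : ℕ) : ℝ :=
  ((Real.exp h - 1) ^ k)⁻¹ *
    ∑ j ∈ Finset.range (k + 1),
      (-1 : ℝ) ^ (k - j) * (k.choose j : ℝ) * Real.exp (j * h) * poisPMF (p * j * h) n

/-- The number of boxes in the row with index `i` of the diagram `s`. -/
def rowLen (s : Finset (ℕ × ℕ)) (i : ℕ) : ℕ := (s.filter fun c => c.2 = i).card

/-- The edge relation of the augmented Young graph on `ℕ₀ × 𝕐`, where an augmented Young
diagram `(λ, □)` is identified with `(x_□, λ)` for `x_□` the column of the special box. -/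
def edgeNY (a b : ℕ × Finset (ℕ × ℕ)) : Prop :=
  a.2 ⊆ b.2 ∧ b.2.card = a.2.card + 1 ∧
    ((∃ r, (a.1, r) ∈ b.2 \ a.2) →
      b.1 = sSup {v : ℕ | (∃ i, rowLen b.2 i = v) ∧ v ≤ a.1}) ∧
    ((¬ ∃ r, (a.1, r) ∈ b.2 \ a.2) → b.1 = a.1)

section Aux

lemma natInf_eq {s : Set ℕ} {n : ℕ} (h1 : n ∈ s) (h2 : ∀ x ∈ s, n ≤ x) : sInf s = n :=
  le_antisymm (Nat.sInf_le h1) (h2 _ (Nat.sInf_mem ⟨n, h1⟩))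

lemma rowOf_nil {α : Type*} (y : ℕ) : rowOf ([] : List (List α)) y = [] := by
  cases y <;> rfl

lemma rowOf_cons_zero {α : Type*} (r : List α) (rest : List (List α)) :
    rowOf (r :: rest) 0 = r := rfl

lemma rowOf_cons_succ {α : Type*} (r : List α) (rest : List (List α)) (y : ℕ) :
    rowOf (r :: rest) (y + 1) = rowOf rest y := List.getD_cons_succ

lemma rowOf_eq_nil {α : Type*} {tab : List (List α)} {y : ℕ} (h : tab.length ≤ y) :
    rowOf tab y = [] := by
  unfold rowOf
  rw [List.getD_eq_getElem?_getD, List.getElem?_eq_none h]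
  rfl

lemma lt_length_of_rowOf_ne_nil {α : Type*} {tab : List (List α)} {y : ℕ}
    (h : rowOf tab y ≠ []) : y < tab.length := by
  by_contra hc
  exact h (rowOf_eq_nil (by omega))

lemma mem_cellsOf {α : Type*} {tab : List (List α)} {x y : ℕ} :
    (x, y) ∈ cellsOf tab ↔ x < (rowOf tab y).length := by
  simp only [cellsOf, Finset.mem_biUnion, Finset.mem_range, Finset.mem_image]
  constructor
  · rintro ⟨y', _, x', hx', h⟩
    obtain ⟨rfl, rfl⟩ : x' = x ∧ y' = y :=
      ⟨congrArg Prod.fst h, congrArg Prod.snd h⟩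
    exact hx'
  · intro h
    have hy : y < tab.length := lt_length_of_rowOf_ne_nil (by
      intro hnil; rw [hnil] at h; simp at h)
    exact ⟨y, hy, x, h, rfl⟩

section Ins

variable {α : Type*} [LinearOrder α]

lemma insertTab_nil (a : α) : insertTab [] a = [[a]] := rfl

lemma insertTab_cons_of_none {r : List α} {a : α}
    (h : r.findIdx? (fun b => decide (a < b)) = none) (rest : List (List α)) :
    insertTab (r :: rest) a = (r ++ [a]) :: rest := by
  simp [insertTab, rowIns, h]

lemma insertTab_cons_of_some {r : List α} {a : α} {i : ℕ}
    (h : r.findIdx? (fun b => decide (a < b)) = some i) (hi : i < r.length)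
    (rest : List (List α)) :
    insertTab (r :: rest) a = (r.set i a) :: insertTab rest (r[i]'hi) := by
  simp [insertTab, rowIns, h, List.getElem?_eq_getElem hi]

lemma length_le_length_insertTab (tab : List (List α)) (a : α) :
    tab.length ≤ (insertTab tab a).length := by
  induction tab generalizing a with
  | nil => simp [insertTab_nil]
  | cons r rest ih =>
    rcases h : r.findIdx? (fun b => decide (a < b)) with _ | i
    · rw [insertTab_cons_of_none h]; simp
    · obtain ⟨hi, -, -⟩ := List.findIdx?_eq_some_iff_getElem.mp h
      rw [insertTab_cons_of_some h hi]
      simpa using ih _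

lemma rowLen_insertTab (tab : List (List α)) (a : α) (z : ℕ) :
    (rowOf (insertTab tab a) z).length = (rowOf tab z).length ∨
    (rowOf (insertTab tab a) z).length = (rowOf tab z).length + 1 := by
  induction tab generalizing a z with
  | nil =>
    rw [insertTab_nil, rowOf_nil]
    cases z with
    | zero => right; simp [rowOf_cons_zero]
    | succ z => left; simp [rowOf_cons_succ, rowOf_nil]
  | cons r rest ih =>
    rcases h : r.findIdx? (fun b => decide (a < b)) with _ | i
    · rw [insertTab_cons_of_none h]
      cases z with
      | zero => right; simp [rowOf_cons_zero]
      | succ z => left; simp [rowOf_cons_succ]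
    · obtain ⟨hi, -, -⟩ := List.findIdx?_eq_some_iff_getElem.mp h
      rw [insertTab_cons_of_some h hi]
      cases z with
      | zero => left; simp [rowOf_cons_zero]
      | succ z => rw [rowOf_cons_succ, rowOf_cons_succ]; exact ih _ _

lemma insTab_append (l : List α) (a : α) :
    insTab (l ++ [a]) = insertTab (insTab l) a := by
  simp [insTab]

end Ins

lemma pref_succ {α : Type*} (w : ℕ → α) (k : ℕ) :
    pref w (k + 1) = pref w k ++ [w k] := by
  simp [pref, List.range_succ]

end Aux

section Rec

lemma rowLen_pref_mono (w : ℕ → ℝ) {j k : ℕ} (h : j ≤ k) (y : ℕ) :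
    (rowOf (insTab (pref w j)) y).length ≤ (rowOf (insTab (pref w k)) y).length := by
  induction k with
  | zero => obtain rfl : j = 0 := by omega
            exact le_refl _
  | succ k ih =>
    rcases Nat.lt_or_ge j (k + 1) with hj | hj
    · refine le_trans (ih (by omega)) ?_
      rw [pref_succ, insTab_append]
      rcases rowLen_insertTab (insTab (pref w k)) (w k) y with h' | h' <;> omega
    · obtain rfl : j = k + 1 := by omega
      exact le_refl _

lemma rowLen_pref_le (w : ℕ → ℝ) (k y : ℕ) :
    (rowOf (insTab (pref w k)) y).length ≤ k := by
  induction k with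
  | zero => simp [pref, insTab, rowOf_nil]
  | succ k ih =>
    rw [pref_succ, insTab_append]
    rcases rowLen_insertTab (insTab (pref w k)) (w k) y with h' | h' <;> omega

lemma recTab_le_iff {w : ℕ → ℝ} {x y k : ℕ} :
    recTab w x y ≤ (k : ℕ∞) ↔ x < (rowOf (insTab (pref w k)) y).length := by
  constructor
  · intro h
    by_contra hc
    have hk : (k : ℕ∞) + 1 ≤ recTab w x y := by
      apply le_sInf
      rintro n ⟨j, rfl, hj⟩
      rw [mem_cellsOf] at hj
      have hjk : k < j := by
        by_contra hjk
        exact hc (lt_of_lt_of_le hj (rowLen_pref_mono w (by omega) y))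
      exact_mod_cast Nat.succ_le_of_lt hjk
    have : (k : ℕ∞) + 1 ≤ (k : ℕ∞) := le_trans hk h
    have h2 : (k : ℕ) + 1 ≤ (k : ℕ) := by exact_mod_cast this
    omega
  · intro h
    exact sInf_le ⟨k, rfl, mem_cellsOf.mpr h⟩

lemma lt_recTab_self (w : ℕ → ℝ) (c y : ℕ) : (c : ℕ∞) < recTab w c y := by
  refine not_le.mp fun h => ?_
  rw [recTab_le_iff] at h
  have := rowLen_pref_le w c y
  omega

lemma routeAux_snd (T : ℕ → ℕ → ℕ∞) (m y : ℕ) :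
    (routeAux T m y).2 = T (routeAux T m y).1 y := by
  cases y <;> rfl

lemma routeAux_fst_zero (T : ℕ → ℕ → ℕ∞) (m : ℕ) :
    (routeAux T m 0).1 = sInf {x : ℕ | (m : ℕ∞) < T x 0} := rfl

lemma routeAux_fst_succ (T : ℕ → ℕ → ℕ∞) (m y : ℕ) :
    (routeAux T m (y + 1)).1 = sInf {x : ℕ | (routeAux T m y).2 < T x (y + 1)} := rfl

lemma route_set_nonempty (w : ℕ → ℝ) (y : ℕ) {e : ℕ∞} (he : e ≠ ⊤) :
    {x : ℕ | e < recTab w x y}.Nonempty := by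
  lift e to ℕ using he with n
  exact ⟨n, lt_recTab_self w n y⟩

lemma routeAux_lt_succ (w : ℕ → ℝ) (m y : ℕ)
    (he : (routeAux (recTab w) m y).2 ≠ ⊤) :
    (routeAux (recTab w) m y).2 < (routeAux (recTab w) m (y + 1)).2 := by
  exact Nat.sInf_mem (route_set_nonempty w (y + 1) he)

lemma route_growth (w : ℕ → ℝ) (m : ℕ) :
    ∀ z : ℕ, (∀ z' < z, (routeAux (recTab w) m z').2 ≠ ⊤) →
      ((m + z : ℕ) : ℕ∞) < (routeAux (recTab w) m z).2 := by
  intro z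
  induction z with
  | zero =>
    intro _
    have hmem := Nat.sInf_mem (route_set_nonempty w 0
      (e := (m : ℕ∞)) WithTop.coe_ne_top)
    exact hmem
  | succ z ih =>
    intro h
    have h1 : ((m + z : ℕ) : ℕ∞) < (routeAux (recTab w) m z).2 :=
      ih fun z' hz' => h z' (by omega)
    have he : (routeAux (recTab w) m z).2 ≠ ⊤ := h z (by omega)
    have h2 := routeAux_lt_succ w m z he
    have h3 : ((m + z : ℕ) : ℕ∞) + 1 ≤ (routeAux (recTab w) m z).2 :=
      (ENat.add_one_le_iff (by exact WithTop.coe_ne_top)).mpr h1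
    calc ((m + (z + 1) : ℕ) : ℕ∞) = ((m + z : ℕ) : ℕ∞) + 1 := by push_cast; ring
    _ ≤ (routeAux (recTab w) m z).2 := h3
    _ < (routeAux (recTab w) m (z + 1)).2 := h2

lemma exists_route_gt (w : ℕ → ℝ) (m t : ℕ) :
    ∃ z : ℕ, (t : ℕ∞) < (routeAux (recTab w) m z).2 := by
  by_cases h : ∀ z' < t + 1, (routeAux (recTab w) m z').2 ≠ ⊤
  · refine ⟨t + 1, lt_of_le_of_lt ?_ (route_growth w m (t + 1) h)⟩
    exact_mod_cast (by omega : t ≤ m + (t + 1))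
  · push_neg at h
    obtain ⟨z, _, hz⟩ := h
    exact ⟨z, by rw [hz]; exact lt_top_iff_ne_top.mpr WithTop.coe_ne_top⟩

lemma lazyRow_eq (w : ℕ → ℝ) (m t y : ℕ)
    (h1 : (t : ℕ∞) < (routeAux (recTab w) m y).2)
    (h2 : ∀ z < y, (routeAux (recTab w) m z).2 ≤ (t : ℕ∞)) :
    lazyRow (recTab w) m t = y := by
  apply natInf_eq h1
  intro z hz
  by_contra hc
  exact absurd (h2 z (by omega)) (not_le.mpr hz)

lemma lazyRow_spec_lt (w : ℕ → ℝ) (m t : ℕ) :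
    (t : ℕ∞) < (routeAux (recTab w) m (lazyRow (recTab w) m t)).2 :=
  Nat.sInf_mem (exists_route_gt w m t)

lemma lazyRow_spec_le (w : ℕ → ℝ) (m t : ℕ) {z : ℕ} (hz : z < lazyRow (recTab w) m t) :
    (routeAux (recTab w) m z).2 ≤ (t : ℕ∞) :=
  not_lt.mp (Nat.notMem_of_lt_sInf hz)

lemma route_col (w : ℕ → ℝ) (s y : ℕ) :
    sInf {x : ℕ | (s : ℕ∞) < recTab w x y} = (rowOf (insTab (pref w s)) y).length := by
  apply natInf_eq
  · show (s : ℕ∞) < recTab w (rowOf (insTab (pref w s)) y).length y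
    refine not_le.mp fun h => ?_
    rw [recTab_le_iff] at h
    omega
  · intro x hx
    simp only [Set.mem_setOf_eq] at hx
    by_contra hc
    exact absurd (recTab_le_iff.mpr (by omega)) (not_le.mpr hx)

end Rec

section TopStuff

/-- Embed a real tableau into `WithTop ℝ`. -/
def mapTopT (tab : List (List ℝ)) : List (List (WithTop ℝ)) :=
  tab.map (List.map (fun x : ℝ => (x : WithTop ℝ)))

lemma rowOf_mapTopT (tab : List (List ℝ)) (y : ℕ) :
    rowOf (mapTopT tab) y = (rowOf tab y).map (fun x : ℝ => (x : WithTop ℝ)) := by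
  unfold rowOf mapTopT
  rw [List.getD_eq_getElem?_getD, List.getD_eq_getElem?_getD, List.getElem?_map]
  cases tab[y]? <;> rfl

lemma length_mapTopT (tab : List (List ℝ)) : (mapTopT tab).length = tab.length := by
  simp [mapTopT]

lemma findIdx?_coe (r : List ℝ) (a : ℝ) :
    (r.map (fun x : ℝ => (x : WithTop ℝ))).findIdx?
        (fun b => decide ((a : WithTop ℝ) < b)) =
      r.findIdx? (fun b => decide (a < b)) := by
  rw [List.findIdx?_map]
  congr 1
  funext b
  simp [Function.comp, WithTop.coe_lt_coe]

lemma insertTab_mapTopT (tab : List (List ℝ)) : ∀ a : ℝ,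
    insertTab (mapTopT tab) ((a : ℝ) : WithTop ℝ) = mapTopT (insertTab tab a) := by
  induction tab with
  | nil => intro a; rfl
  | cons r rest ih =>
    intro a
    have hmap : mapTopT (r :: rest)
        = (r.map (fun x : ℝ => (x : WithTop ℝ))) :: mapTopT rest := rfl
    rcases h : r.findIdx? (fun b => decide (a < b)) with _ | i
    · rw [hmap, insertTab_cons_of_none (by rw [findIdx?_coe]; exact h),
        insertTab_cons_of_none h]
      simp [mapTopT]
    · obtain ⟨hi, -, -⟩ := List.findIdx?_eq_some_iff_getElem.mp h
      have hi' : i < (r.map (fun x : ℝ => (x : WithTop ℝ))).length := by simpa using hi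
      rw [hmap, insertTab_cons_of_some (by rw [findIdx?_coe]; exact h) hi',
        insertTab_cons_of_some h hi]
      have hgm : (r.map (fun x : ℝ => (x : WithTop ℝ)))[i]'hi'
          = ((r[i]'hi : ℝ) : WithTop ℝ) := by simp
      rw [hgm, ih]
      simp [mapTopT]

lemma insTab_map (l : List ℝ) :
    insTab (l.map (fun x : ℝ => (x : WithTop ℝ))) = mapTopT (insTab l) := by
  induction l using List.reverseRecOn with
  | nil => rfl
  | append_singleton l a ih =>
    rw [List.map_append, List.map_singleton, insTab_append, insTab_append, ih]
    exact insertTab_mapTopT _ a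

/-- Append `⊤` at the end of the row with index `y`. -/
def appTop : List (List (WithTop ℝ)) → ℕ → List (List (WithTop ℝ))
  | [], _ => [[⊤]]
  | r :: rest, 0 => (r ++ [⊤]) :: rest
  | r :: rest, y + 1 => r :: appTop rest y

lemma rowOf_appTop_self :
    ∀ (tab : List (List (WithTop ℝ))) (y : ℕ), y ≤ tab.length →
      rowOf (appTop tab y) y = rowOf tab y ++ [⊤] := by
  intro tab
  induction tab with
  | nil =>
    intro y hy
    obtain rfl : y = 0 := by simpa using hy
    simp [appTop, rowOf_nil, rowOf_cons_zero]
  | cons r rest ih =>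
    intro y hy
    cases y with
    | zero => rfl
    | succ y =>
      show rowOf (r :: appTop rest y) (y + 1) = _
      rw [rowOf_cons_succ, rowOf_cons_succ, ih y (by simpa using hy)]

lemma rowOf_appTop_ne :
    ∀ (tab : List (List (WithTop ℝ))) (y z : ℕ), y ≤ tab.length → z ≠ y →
      rowOf (appTop tab y) z = rowOf tab z := by
  intro tab
  induction tab with
  | nil =>
    intro y z hy hz
    obtain rfl : y = 0 := by simpa using hy
    cases z with
    | zero => exact absurd rfl hz
    | succ z => show rowOf [[⊤]] (z + 1) = _
                rw [rowOf_cons_succ, rowOf_nil, rowOf_nil]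
  | cons r rest ih =>
    intro y z hy hz
    cases y with
    | zero =>
      cases z with
      | zero => exact absurd rfl hz
      | succ z =>
        show rowOf ((r ++ [⊤]) :: rest) (z + 1) = _
        rw [rowOf_cons_succ, rowOf_cons_succ]
    | succ y =>
      cases z with
      | zero => rfl
      | succ z =>
        show rowOf (r :: appTop rest y) (z + 1) = _
        rw [rowOf_cons_succ, rowOf_cons_succ]
        exact ih y z (by simpa using hy) (by omega)

lemma insertTab_top (l : List (List (WithTop ℝ))) :
    insertTab l (⊤ : WithTop ℝ) = appTop l 0 := by
  cases l with
  | nil => rfl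
  | cons r rest =>
    rw [insertTab_cons_of_none (List.findIdx?_eq_none_iff.mpr fun x _ => by
      simp [not_top_lt])]
    rfl

lemma insertTab_appTop :
    ∀ (tab : List (List (WithTop ℝ))), (∀ r ∈ tab, ∀ v ∈ r, v ≠ ⊤) →
      ∀ (a : WithTop ℝ), a ≠ ⊤ → ∀ y : ℕ, y ≤ tab.length →
      insertTab (appTop tab y) a =
        if (rowOf (insertTab tab a) y).length = (rowOf tab y).length + 1
        then appTop (insertTab tab a) (y + 1)
        else appTop (insertTab tab a) y := by
  intro tab
  induction tab with
  | nil =>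
    intro _ a ha y hy
    obtain rfl : y = 0 := by simpa using hy
    have hfind : [(⊤ : WithTop ℝ)].findIdx? (fun b => decide (a < b)) = some 0 := by
      simp [List.findIdx?_cons, WithTop.lt_top_iff_ne_top.mpr ha]
    show insertTab [[⊤]] a = _
    rw [insertTab_cons_of_some hfind (by simp)]
    have hcond : (rowOf (insertTab [] a) 0).length = (rowOf ([] : List (List (WithTop ℝ))) 0).length + 1 := by
      rw [insertTab_nil, rowOf_nil, rowOf_cons_zero]; rfl
    rw [if_pos hcond]
    rfl
  | cons r rest ih =>
    intro hreal a ha y hy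
    cases y with
    | zero =>
      show insertTab ((r ++ [⊤]) :: rest) a = _
      rcases hfind : r.findIdx? (fun b => decide (a < b)) with _ | i
      · have hfind' : (r ++ [⊤]).findIdx? (fun b => decide (a < b)) = some r.length := by
          rw [List.findIdx?_append, hfind]
          simp [List.findIdx?_cons, WithTop.lt_top_iff_ne_top.mpr ha]
        have hlen : r.length < (r ++ [⊤]).length := by simp
        rw [insertTab_cons_of_some hfind' hlen]
        have h1 : (r ++ [⊤]).set r.length a = r ++ [a] := by
          rw [List.set_append_right _ _ (le_refl _)]
          simp
        have h2 : ((r ++ [⊤])[r.length]'hlen) = ⊤ :=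
          by simp
        rw [h1, h2, insertTab_top, insertTab_cons_of_none hfind]
        have hcond : (rowOf ((r ++ [a]) :: rest) 0).length
            = (rowOf (r :: rest) 0).length + 1 := by
          rw [rowOf_cons_zero, rowOf_cons_zero]; simp
        rw [if_pos hcond]
        rfl
      · obtain ⟨hi, -, -⟩ := List.findIdx?_eq_some_iff_getElem.mp hfind
        have hfind' : (r ++ [⊤]).findIdx? (fun b => decide (a < b)) = some i := by
          rw [List.findIdx?_append, hfind]; rfl
        have hlen : i < (r ++ [⊤]).length := by simp; omega
        rw [insertTab_cons_of_some hfind' hlen]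
        have h1 : (r ++ [⊤]).set i a = (r.set i a) ++ [⊤] :=
          List.set_append_left _ _ hi
        have h2 : (r ++ [⊤])[i]'hlen = r[i]'hi := List.getElem_append_left hi
        rw [h1, h2, insertTab_cons_of_some hfind hi]
        have hcond : ¬ ((rowOf ((r.set i a) :: insertTab rest (r[i]'hi)) 0).length
            = (rowOf (r :: rest) 0).length + 1) := by
          rw [rowOf_cons_zero, rowOf_cons_zero, List.length_set]; omega
        rw [if_neg hcond]
        rfl
    | succ y =>
      have hy' : y ≤ rest.length := by simpa using hy
      show insertTab (r :: appTop rest y) a = _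
      rcases hfind : r.findIdx? (fun b => decide (a < b)) with _ | i
      · rw [insertTab_cons_of_none hfind, insertTab_cons_of_none hfind]
        have hcond : ¬ ((rowOf ((r ++ [a]) :: rest) (y + 1)).length
            = (rowOf (r :: rest) (y + 1)).length + 1) := by
          rw [rowOf_cons_succ, rowOf_cons_succ]; omega
        rw [if_neg hcond]
        rfl
      · obtain ⟨hi, -, -⟩ := List.findIdx?_eq_some_iff_getElem.mp hfind
        have hb : (r[i]'hi) ≠ ⊤ :=
          hreal r List.mem_cons_self _ (List.getElem_mem hi)
        rw [insertTab_cons_of_some hfind hi,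
          ih (fun r' hr' => hreal r' (List.mem_cons_of_mem r hr')) _ hb y hy',
          insertTab_cons_of_some hfind hi]
        by_cases hc : (rowOf (insertTab rest (r[i]'hi)) y).length
            = (rowOf rest y).length + 1
        · rw [if_pos hc, if_pos (by rw [rowOf_cons_succ, rowOf_cons_succ]; exact hc)]
          rfl
        · rw [if_neg hc, if_neg (by rw [rowOf_cons_succ, rowOf_cons_succ]; exact hc)]
          rfl

end TopStuff

section Assemble

lemma wtSeq_self (w : ℕ → ℝ) (m : ℕ) :
    wtSeq w m m = (pref w m).map (fun x : ℝ => (x : WithTop ℝ)) ++ [⊤] := by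
  simp [wtSeq, pref, Nat.sub_self, List.map_map, Function.comp]

lemma wtSeq_succ (w : ℕ → ℝ) (m t : ℕ) (h : m ≤ t) :
    wtSeq w m (t + 1) = wtSeq w m t ++ [((w t : ℝ) : WithTop ℝ)] := by
  have h1 : t + 1 - m = (t - m) + 1 := by omega
  have h2 : m + (t - m) = t := by omega
  simp [wtSeq, h1, List.range_succ, h2, List.append_assoc]

lemma posTop_appTop (tab : List (List ℝ)) {y : ℕ} (hy : y ≤ tab.length) :
    posTop (appTop (mapTopT tab) y) = ((rowOf tab y).length, y) := by
  have hy' : y ≤ (mapTopT tab).length := by rwa [length_mapTopT]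
  have hrow : rowOf (appTop (mapTopT tab) y) y
      = (rowOf tab y).map (fun x : ℝ => (x : WithTop ℝ)) ++ [⊤] := by
    rw [rowOf_appTop_self _ _ hy', rowOf_mapTopT]
  have hrow' : ∀ z, z ≠ y → rowOf (appTop (mapTopT tab) y) z
      = (rowOf tab z).map (fun x : ℝ => (x : WithTop ℝ)) := fun z hz => by
    rw [rowOf_appTop_ne _ _ _ hy' hz, rowOf_mapTopT]
  have hYrow : sInf {z : ℕ | (⊤ : WithTop ℝ) ∈ rowOf (appTop (mapTopT tab) y) z} = y := by
    apply natInf_eq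
    · show (⊤ : WithTop ℝ) ∈ rowOf (appTop (mapTopT tab) y) y
      rw [hrow]; simp
    · intro z hz
      simp only [Set.mem_setOf_eq] at hz
      by_contra hc
      rw [hrow' z (by omega)] at hz
      obtain ⟨v, -, hv⟩ := List.mem_map.mp hz
      exact WithTop.coe_ne_top hv
  unfold posTop
  rw [hYrow, hrow]
  refine Prod.ext ?_ rfl
  show sInf {x : ℕ | ((rowOf tab y).map (fun x : ℝ => (x : WithTop ℝ)) ++ [⊤]).getD x 0 = ⊤}
      = (rowOf tab y).length
  apply natInf_eq
  · simp only [Set.mem_setOf_eq]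
    have hlen : (rowOf tab y).length
        = ((rowOf tab y).map (fun x : ℝ => (x : WithTop ℝ))).length := by simp
    rw [List.getD_eq_getElem?_getD, hlen, List.getElem?_concat_length]
    rfl
  · intro x hx
    simp only [Set.mem_setOf_eq] at hx
    by_contra hc
    have hxL : x < ((rowOf tab y).map (fun x : ℝ => (x : WithTop ℝ))).length := by
      simp only [List.length_map]; omega
    rw [List.getD_eq_getElem?_getD, List.getElem?_append_left hxL,
      List.getElem?_eq_getElem hxL] at hx
    simp only [Option.getD_some, List.getElem_map] at hx
    exact WithTop.coe_ne_top hx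

lemma mapTopT_real (tab : List (List ℝ)) :
    ∀ r ∈ mapTopT tab, ∀ v ∈ r, v ≠ (⊤ : WithTop ℝ) := by
  intro r hr v hv
  obtain ⟨r0, -, rfl⟩ := List.mem_map.mp hr
  obtain ⟨x, -, rfl⟩ := List.mem_map.mp hv
  exact WithTop.coe_ne_top

theorem main_inv (w : ℕ → ℝ) (m : ℕ) :
    ∀ t : ℕ, m ≤ t → ∃ y : ℕ,
      y ≤ (insTab (pref w t)).length ∧
      insTab (wtSeq w m t) = appTop (mapTopT (insTab (pref w t))) y ∧
      lazyBox (recTab w) m t = ((rowOf (insTab (pref w t)) y).length, y) := by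
  intro t ht
  induction t, ht using Nat.le_induction with
  | base =>
    refine ⟨0, Nat.zero_le _, ?_, ?_⟩
    · rw [wtSeq_self, insTab_append, insTab_map, insertTab_top]
    · have hl : lazyRow (recTab w) m m = 0 := by
        apply lazyRow_eq w m m 0 ?_ (by omega)
        simpa using route_growth w m 0 (by omega)
      unfold lazyBox
      rw [hl]
      refine Prod.ext ?_ rfl
      show (routeAux (recTab w) m 0).1 = _
      rw [routeAux_fst_zero, route_col w m 0]
  | succ t ht ih =>
    obtain ⟨y, hylen, hA, hB⟩ := ih
    have hP1 : insTab (pref w (t + 1)) = insertTab (insTab (pref w t)) (w t) := by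
      rw [pref_succ, insTab_append]
    have hlr : lazyRow (recTab w) m t = y := congrArg Prod.snd hB
    have hx' : (routeAux (recTab w) m y).1 = (rowOf (insTab (pref w t)) y).length := by
      have h := congrArg Prod.fst hB
      rwa [show (lazyBox (recTab w) m t).1
        = (routeAux (recTab w) m (lazyRow (recTab w) m t)).1 from rfl, hlr] at h
    have ht_lt : (t : ℕ∞) < (routeAux (recTab w) m y).2 := by
      have h := lazyRow_spec_lt w m t
      rwa [hlr] at h
    have hz_le : ∀ z < y, (routeAux (recTab w) m z).2 ≤ (t : ℕ∞) := by
      intro z hz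
      exact lazyRow_spec_le w m t (by rw [hlr]; omega)
    have hey : (routeAux (recTab w) m y).2
        = recTab w (rowOf (insTab (pref w t)) y).length y := by
      rw [routeAux_snd, hx']
    have hA1 : insTab (wtSeq w m (t + 1))
        = insertTab (appTop (mapTopT (insTab (pref w t))) y) ((w t : ℝ) : WithTop ℝ) := by
      rw [wtSeq_succ w m t ht, insTab_append, hA]
    have key := insertTab_appTop (mapTopT (insTab (pref w t))) (mapTopT_real _)
      ((w t : ℝ) : WithTop ℝ) WithTop.coe_ne_top y (by rw [length_mapTopT]; exact hylen)
    simp only [insertTab_mapTopT, rowOf_mapTopT, List.length_map] at key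
    rcases rowLen_insertTab (insTab (pref w t)) (w t) y with hc | hc
    · -- the box of step t+1 is NOT added to row y
      have hcond : ¬ ((rowOf (insertTab (insTab (pref w t)) (w t)) y).length
          = (rowOf (insTab (pref w t)) y).length + 1) := by omega
      rw [if_neg hcond] at key
      refine ⟨y, ?_, ?_, ?_⟩
      · rw [hP1]; exact hylen.trans (length_le_length_insertTab _ _)
      · rw [hA1, key, hP1]
      · have hlt1 : ((t + 1 : ℕ) : ℕ∞) < (routeAux (recTab w) m y).2 := by
          rw [hey]
          refine not_le.mp fun hle => ?_
          rw [recTab_le_iff, hP1] at hle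
          omega
        have hl1 : lazyRow (recTab w) m (t + 1) = y := by
          apply lazyRow_eq w m (t + 1) y hlt1
          intro z hz
          exact (hz_le z hz).trans (by exact_mod_cast Nat.le_succ t)
        unfold lazyBox
        rw [hl1]
        refine Prod.ext ?_ rfl
        show (routeAux (recTab w) m y).1 = _
        rw [hx', hP1, hc]
    · -- the box of step t+1 IS added to row y
      rw [if_pos hc] at key
      have hrowne : y < (insTab (pref w (t + 1))).length := by
        apply lt_length_of_rowOf_ne_nil
        rw [hP1]
        intro hnil
        rw [hnil] at hc
        simp at hc
      refine ⟨y + 1, by omega, ?_, ?_⟩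
      · rw [hA1, key, hP1]
      · have he_le : (routeAux (recTab w) m y).2 ≤ ((t + 1 : ℕ) : ℕ∞) := by
          rw [hey]
          apply recTab_le_iff.mpr
          rw [hP1]
          omega
        have he_eq : (routeAux (recTab w) m y).2 = ((t + 1 : ℕ) : ℕ∞) := by
          refine le_antisymm he_le ?_
          have h1 : ((t : ℕ) : ℕ∞) + 1 ≤ (routeAux (recTab w) m y).2 :=
            (ENat.add_one_le_iff WithTop.coe_ne_top).mpr ht_lt
          calc ((t + 1 : ℕ) : ℕ∞) = ((t : ℕ) : ℕ∞) + 1 := by push_cast; ring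
          _ ≤ _ := h1
        have hx1 : (routeAux (recTab w) m (y + 1)).1
            = (rowOf (insTab (pref w (t + 1))) (y + 1)).length := by
          rw [routeAux_fst_succ, he_eq, route_col w (t + 1) (y + 1)]
        have hlt1 : ((t + 1 : ℕ) : ℕ∞) < (routeAux (recTab w) m (y + 1)).2 := by
          have h1 := routeAux_lt_succ w m y (by rw [he_eq]; exact WithTop.coe_ne_top)
          rwa [he_eq] at h1
        have hl1 : lazyRow (recTab w) m (t + 1) = y + 1 := by
          apply lazyRow_eq w m (t + 1) (y + 1) hlt1
          intro z hz
          rcases Nat.lt_succ_iff_lt_or_eq.mp hz with hz' | rfl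
          · exact (hz_le z hz').trans (by exact_mod_cast Nat.le_succ t)
          · exact le_of_eq he_eq
        unfold lazyBox
        rw [hl1]
        exact Prod.ext hx1 rfl

end Assemble


/-- For any sequence of distinct reals `ξ₁, ξ₂, …`, the lazy
parametrization of the bumping route of the recording tableau `T = Q(ξ₁, ξ₂, …)`
coincides with the trajectory of `∞`:
`Box^{lazy}_{T,m}(t) = Pos_∞(P(ξ₁, …, ξ_m, ∞, ξ_{m+1}, …, ξ_t))` for all `t ≥ m`. -/
theorem lazy_parametrization_eq_trajectory_of_infinity
    (w : ℕ → ℝ) (hw : Function.Injective w) (m : ℕ) :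
    ∀ t : ℕ, m ≤ t →
      lazyBox (recTab w) m t = posTop (insTab (wtSeq w m t)) := by
  intro t ht
  obtain ⟨y, hylen, hA, hB⟩ := main_inv w m t ht
  rw [hA, posTop_appTop _ hylen]
  exact hB

end PoissonBump
end
end

section
/- Let p : 𝕐* → 𝕐 be the map sending an augmented Young diagram (λ,□) to its regular part λ. For any Λ^{(m)} ∈ 𝕐* and any path λ^{(m)} ↗ λ^{(m+1)} ↗ ⋯ in the Young graph with λ^{(m)} = p(Λ^{(m)}), there exists a unique path Λ^{(m)} ↗ Λ^{(m+1)} ↗ ⋯ in the augmented Young graph with the given initial element Λ^{(m)} and such that p(Λ^{(t)}) = λ^{(t)} for every t ∈ {m, m+1, …}. -/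
open MeasureTheory ProbabilityTheory Filter Topology

noncomputable section

namespace PoissonBump

/-- An augmented Young diagram: a Young diagram (finite lower set in `ℕ × ℕ`, boxes
written as `(column, row)`) together with one of its outer corners. -/
structure AugYD where
  cells : Finset (ℕ × ℕ)
  corner : ℕ × ℕ
  lower : IsLowerSet (cells : Set (ℕ × ℕ))
  corner_not_mem : corner ∉ cells
  lower_insert : IsLowerSet (insert corner (cells : Set (ℕ × ℕ)))

/-- The edge relation of the Young graph: `s'` is obtained from `s` by adding one box. -/
def YDedge (s s' : Finset (ℕ × ℕ)) : Prop := s ⊆ s' ∧ s'.card = s.card + 1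

open scoped Classical in
/-- The edge relation of the augmented Young graph. -/
def AugEdge (a b : AugYD) : Prop :=
  YDedge a.cells b.cells ∧
    (if b.cells = insert a.corner a.cells then b.corner.2 = a.corner.2 + 1
     else b.corner = a.corner)

lemma AugYD.ext' {a b : AugYD} (h1 : a.cells = b.cells) (h2 : a.corner = b.corner) :
    a = b := by
  cases a; cases b; simp_all

lemma lower_nat_mem_iff {T : Finset ℕ} (h : ∀ x ∈ T, ∀ u ≤ x, u ∈ T) (x : ℕ) :
    x ∈ T ↔ x < T.card := by
  constructor
  · intro hx
    have hsub : Finset.range (x + 1) ⊆ T := fun u hu =>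
      h x hx u (Nat.lt_succ_iff.mp (Finset.mem_range.mp hu))
    have := Finset.card_le_card hsub
    simpa using this
  · intro hx
    by_contra hxT
    have hsub : T ⊆ Finset.range x := by
      intro t ht
      rw [Finset.mem_range]
      by_contra htx
      exact hxT (h t ht x (Nat.le_of_not_lt htx))
    have := Finset.card_le_card hsub
    simp at this
    omega

lemma mem_iff_lt_rowLen {s : Finset (ℕ × ℕ)} (hs : IsLowerSet (s : Set (ℕ × ℕ)))
    (x y : ℕ) : (x, y) ∈ s ↔ x < rowLen s y := by
  set T : Finset ℕ := (s.filter fun c => c.2 = y).image Prod.fst with hT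
  have hmemT : ∀ u : ℕ, u ∈ T ↔ (u, y) ∈ s := by
    intro u
    simp only [hT, Finset.mem_image, Finset.mem_filter]
    constructor
    · rintro ⟨⟨a, b⟩, ⟨hab, rfl⟩, rfl⟩; exact hab
    · intro h; exact ⟨(u, y), ⟨h, rfl⟩, rfl⟩
  have hcard : T.card = rowLen s y := by
    rw [hT, rowLen]
    apply Finset.card_image_of_injOn
    intro p hp q hq hpq
    simp only [Finset.mem_coe, Finset.mem_filter] at hp hq
    exact Prod.ext hpq (hp.2.trans hq.2.symm)
  have hlow : ∀ u ∈ T, ∀ v ≤ u, v ∈ T := by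
    intro u hu v hv
    rw [hmemT] at hu ⊢
    exact hs (Prod.mk_le_mk.mpr ⟨hv, le_refl y⟩) hu
  rw [← hmemT, lower_nat_mem_iff hlow, hcard]

lemma corner_col {s : Finset (ℕ × ℕ)} {c : ℕ × ℕ} (hs : IsLowerSet (s : Set (ℕ × ℕ)))
    (hc : c ∉ s) (hins : IsLowerSet (insert c (s : Set (ℕ × ℕ)))) :
    c.1 = rowLen s c.2 := by
  obtain ⟨x, y⟩ := c
  show x = rowLen s y
  have h1 : rowLen s y ≤ x := by
    have := (mem_iff_lt_rowLen hs x y).not.mp hc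
    omega
  rcases Nat.eq_zero_or_pos x with hx | hx
  · omega
  · have h2 : (x - 1, y) ∈ insert (x, y) (s : Set (ℕ × ℕ)) :=
      hins (Prod.mk_le_mk.mpr ⟨Nat.sub_le x 1, le_refl y⟩) (Set.mem_insert _ _)
    rcases h2 with h2 | h2
    · exfalso
      have : x - 1 = x := congrArg Prod.fst h2
      omega
    · have := (mem_iff_lt_rowLen hs (x - 1) y).mp h2
      omega

lemma rowLen_insert_same {s : Finset (ℕ × ℕ)} {c : ℕ × ℕ} (hc : c ∉ s) :
    rowLen (insert c s) c.2 = rowLen s c.2 + 1 := by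
  rw [rowLen, rowLen, Finset.filter_insert, if_pos rfl,
    Finset.card_insert_of_notMem (fun h => hc (Finset.mem_filter.mp h).1)]

lemma rowLen_insert_ne {s : Finset (ℕ × ℕ)} {c : ℕ × ℕ} {y : ℕ} (hy : c.2 ≠ y) :
    rowLen (insert c s) y = rowLen s y := by
  rw [rowLen, rowLen, Finset.filter_insert, if_neg hy]

lemma rowLen_anti {s : Finset (ℕ × ℕ)} (hs : IsLowerSet (s : Set (ℕ × ℕ))) (y : ℕ) :
    rowLen s (y + 1) ≤ rowLen s y := by
  by_contra h
  push_neg at h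
  have h1 : (rowLen s y, y + 1) ∈ s := (mem_iff_lt_rowLen hs _ _).mpr h
  have h2 : (rowLen s y, y) ∈ s :=
    hs (Prod.mk_le_mk.mpr ⟨le_refl _, Nat.le_succ y⟩) h1
  exact absurd ((mem_iff_lt_rowLen hs _ _).mp h2) (lt_irrefl _)

lemma step_exists_unique (a : AugYD) (s' : Finset (ℕ × ℕ))
    (hl : IsLowerSet (s' : Set (ℕ × ℕ))) (he : YDedge a.cells s') :
    ∃! b : AugYD, AugEdge a b ∧ b.cells = s' := by
  classical
  obtain ⟨C, ⟨cx, cy⟩, hLw, hNm, hIns⟩ := a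
  simp only at he ⊢
  by_cases hcm : (cx, cy) ∈ s'
  · -- bump case : s' = insert corner cells
    have hs' : s' = insert (cx, cy) C := by
      apply (Finset.eq_of_subset_of_card_le _ _).symm
      · intro p hp
        rcases Finset.mem_insert.mp hp with rfl | hp
        · exact hcm
        · exact he.1 hp
      · rw [he.2, Finset.card_insert_of_notMem hNm]
    have hcc : cx = rowLen C cy := corner_col hLw hNm hIns
    have hrow1 : rowLen s' (cy + 1) = rowLen C (cy + 1) := by
      rw [hs', rowLen_insert_ne (by simp)]
    have hrowcy : rowLen s' cy = cx + 1 := by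
      rw [hs']
      have := rowLen_insert_same (s := C) (c := ((cx, cy) : ℕ × ℕ)) hNm
      simp only at this
      omega
    have hℓlt : rowLen s' (cy + 1) < rowLen s' cy := by
      have := rowLen_anti hLw cy
      omega
    set ℓ := rowLen s' (cy + 1) with hℓ
    have hnm : (ℓ, cy + 1) ∉ s' := by
      rw [mem_iff_lt_rowLen hl, ← hℓ]
      omega
    have hins : IsLowerSet (insert (ℓ, cy + 1) (s' : Set (ℕ × ℕ))) := by
      intro p q hle hp
      rcases hp with hp | hp
      · -- p = (ℓ, cy+1)
        subst hp
        by_cases hq : q = (ℓ, cy + 1)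
        · exact hq ▸ Set.mem_insert _ _
        · right
          obtain ⟨qx, qy⟩ := q
          obtain ⟨hq1, hq2⟩ := Prod.mk_le_mk.mp hle
          rcases Nat.lt_succ_iff_lt_or_eq.mp (Nat.lt_succ_of_le hq2) with hqy | rfl
          · have hmem : (ℓ, cy) ∈ s' := (mem_iff_lt_rowLen hl _ _).mpr hℓlt
            exact hl (Prod.mk_le_mk.mpr ⟨hq1, by omega⟩) hmem
          · have hqlt : qx < ℓ := lt_of_le_of_ne hq1 (fun h => hq (by simp [h]))
            exact (mem_iff_lt_rowLen hl _ _).mpr hqlt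
      · exact Set.mem_insert_iff.mpr (Or.inr (hl hle hp))
    refine ⟨⟨s', (ℓ, cy + 1), hl, hnm, hins⟩, ⟨⟨he, ?_⟩, rfl⟩, ?_⟩
    · simp only [AugYD.cells, AugYD.corner, if_pos hs']
    · rintro b' ⟨⟨_, hif⟩, hcells⟩
      apply AugYD.ext' hcells
      simp only [AugYD.cells, AugYD.corner] at hif ⊢
      rw [if_pos (hcells.trans hs')] at hif
      have hcol := corner_col b'.lower b'.corner_not_mem b'.lower_insert
      rw [hcells] at hcol
      have h1 : b'.corner.1 = ℓ := by rw [hcol, hif]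
      exact Prod.ext h1 hif
  · -- non-bump case
    have hne : s' ≠ insert (cx, cy) C := by
      intro h
      exact hcm (h ▸ Finset.mem_insert_self _ _)
    have hins : IsLowerSet (insert ((cx, cy) : ℕ × ℕ) (s' : Set (ℕ × ℕ))) := by
      have hsub : (C : Set (ℕ × ℕ)) ⊆ (s' : Set (ℕ × ℕ)) := fun p hp => he.1 hp
      have heq : insert ((cx, cy) : ℕ × ℕ) (s' : Set (ℕ × ℕ)) =
          insert ((cx, cy) : ℕ × ℕ) (C : Set (ℕ × ℕ)) ∪ (s' : Set (ℕ × ℕ)) := by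
        ext p
        simp only [Set.mem_insert_iff, Set.mem_union]
        constructor
        · rintro (h | h)
          · exact Or.inl (Or.inl h)
          · exact Or.inr h
        · rintro ((h | h) | h)
          · exact Or.inl h
          · exact Or.inr (hsub h)
          · exact Or.inr h
      rw [heq]
      exact hIns.union hl
    refine ⟨⟨s', (cx, cy), hl, hcm, hins⟩, ⟨⟨he, ?_⟩, rfl⟩, ?_⟩
    · simp only [AugYD.cells, AugYD.corner, if_neg hne]
    · rintro b' ⟨⟨_, hif⟩, hcells⟩
      apply AugYD.ext' hcells
      simp only [AugYD.cells, AugYD.corner] at hif ⊢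
      rw [if_neg (by rw [hcells]; exact hne)] at hif
      exact hif

/-- Lifting of paths: for any augmented Young diagram `Λ` and any path
`λ^{(m)} ↗ λ^{(m+1)} ↗ ⋯` in the Young graph with `λ^{(m)} = p(Λ)`, there is a unique
lifted path in the augmented Young graph starting at `Λ` whose regular parts are the
`λ^{(t)}`. -/
theorem unique_lifting_of_paths
    (m : ℕ) (Λ : AugYD) (lam : ℕ → Finset (ℕ × ℕ))
    (hlower : ∀ t, IsLowerSet ((lam t : Set (ℕ × ℕ))))
    (hpath : ∀ t, m ≤ t → YDedge (lam t) (lam (t + 1)))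
    (hinit : lam m = Λ.cells) :
    ∃ L : ℕ → AugYD,
      (L m = Λ ∧ ∀ t, m ≤ t → AugEdge (L t) (L (t + 1)) ∧ (L t).cells = lam t) ∧
      ∀ L' : ℕ → AugYD,
        (L' m = Λ ∧ ∀ t, m ≤ t → AugEdge (L' t) (L' (t + 1)) ∧ (L' t).cells = lam t) →
        ∀ t, m ≤ t → L' t = L t := by
  classical
  let next : AugYD → ℕ → AugYD := fun a t =>
    if h : YDedge a.cells (lam (t + 1)) then
      (step_exists_unique a (lam (t + 1)) (hlower (t + 1)) h).choose
    else a
  let F : ℕ → AugYD := fun k => Nat.rec Λ (fun k b => next b (m + k)) k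
  have hF0 : F 0 = Λ := rfl
  have hstep : ∀ k, (F k).cells = lam (m + k) →
      AugEdge (F k) (F (k + 1)) ∧ (F (k + 1)).cells = lam (m + k + 1) := by
    intro k hk
    have hed : YDedge (F k).cells (lam (m + k + 1)) := by
      rw [hk]; exact hpath (m + k) (Nat.le_add_right m k)
    have hFk : F (k + 1) =
        (step_exists_unique (F k) (lam (m + k + 1)) (hlower (m + k + 1)) hed).choose := by
      show next (F k) (m + k) = _
      simp only [next]
      rw [dif_pos hed]
    rw [hFk]
    exact (step_exists_unique (F k) (lam (m + k + 1)) (hlower (m + k + 1)) hed).choose_spec.1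
  have hcells : ∀ k, (F k).cells = lam (m + k) := by
    intro k
    induction k with
    | zero => simpa [hF0] using hinit.symm
    | succ k ih => exact (hstep k ih).2
  refine ⟨fun t => F (t - m), ⟨by simp only [Nat.sub_self]; exact hF0, ?_⟩, ?_⟩
  · intro t ht
    have h1 : t + 1 - m = (t - m) + 1 := by omega
    have h2 : m + (t - m) = t := by omega
    refine ⟨?_, by rw [hcells (t - m), h2]⟩
    simp only [h1]
    exact (hstep (t - m) (hcells _)).1
  · rintro L' ⟨hL'0, hL'⟩ t ht
    induction t, ht using Nat.le_induction with
    | base => simp only [Nat.sub_self]; exact hL'0.trans hF0.symm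
    | succ t ht ih =>
      have h1 : t + 1 - m = (t - m) + 1 := by omega
      have h2 : m + (t - m) = t := by omega
      have hed : YDedge (F (t - m)).cells (lam (t + 1)) := by
        rw [hcells (t - m), h2]; exact hpath t ht
      have hEU := step_exists_unique (F (t - m)) (lam (t + 1)) (hlower (t + 1)) hed
      have hP1 : AugEdge (F (t - m)) (L' (t + 1)) ∧ (L' (t + 1)).cells = lam (t + 1) := by
        refine ⟨?_, (hL' (t + 1) (by omega)).2⟩
        have := (hL' t ht).1
        rwa [ih] at this
      have hP2 : AugEdge (F (t - m)) (F (t - m + 1)) ∧ (F (t - m + 1)).cells = lam (t + 1) := by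
        have := hstep (t - m) (hcells _)
        rw [h2] at this
        exact this
      show L' (t + 1) = F (t + 1 - m)
      rw [h1]
      exact hEU.unique hP1 hP2

end PoissonBump
end
end

section
/- Fix an integer k ≥ 0 and a real number 0 ≤ p ≤ 1. For each h > 0, the linear combination of Poisson distributions ν_{k,p,h} := (e^h − 1)^{−k} · Σ_{0 ≤ j ≤ k} (−1)^{k−j} · C(k,j) · e^{jh} · Pois(p·j·h) is a probability measure on ℕ₀, and as h → 0 the measure ν_{k,p,h} converges in total variation distance to the binomial distribution Binom(k,p). Moreover (case p = 1) its atoms are given explicitly by ν_{k,1,h}(m) = h^m · k! · S(m,k) / ((e^h − 1)^k · m!) for m ∈ ℕ₀, where S(m,k) is the Stirling number of the second kind; in particular ν_{k,1,h} is supported on {k, k+1, …}. -/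
open MeasureTheory ProbabilityTheory Filter Topology

noncomputable section

namespace PoissonBump

/-! ### Auxiliary lemmas for Statement 16 -/

lemma stirling2_eq_zero : ∀ {n m : ℕ}, n < m → stirling2 n m = 0
  | 0, _ + 1, _ => rfl
  | n + 1, m + 1, h => by
    have h1 : n < m := by omega
    simp [stirling2, stirling2_eq_zero h1, stirling2_eq_zero (h1.trans (Nat.lt_succ_self m))]

lemma stirling2_self : ∀ n : ℕ, stirling2 n n = 1
  | 0 => rfl
  | n + 1 => by
    simp [stirling2, stirling2_self n, stirling2_eq_zero (Nat.lt_succ_self n)]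

lemma jc (j m : ℕ) :
    (j : ℝ) * j.choose m = (m : ℝ) * j.choose m + ((m : ℝ) + 1) * j.choose (m + 1) := by
  rcases le_or_gt m j with h | h
  · have h2 : ((j.choose (m + 1) * (m + 1) : ℕ) : ℝ) = ((j.choose m * (j - m) : ℕ) : ℝ) := by
      exact_mod_cast congrArg (Nat.cast : ℕ → ℝ) (Nat.choose_succ_right_eq j m)
    push_cast [Nat.cast_sub h] at h2
    linear_combination -h2
  · simp [Nat.choose_eq_zero_of_lt h, Nat.choose_eq_zero_of_lt (h.trans (Nat.lt_succ_self m))]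

lemma stirling_expand (n j : ℕ) :
    (j : ℝ) ^ n = ∑ m ∈ Finset.range (n + 1),
      (stirling2 n m : ℝ) * m.factorial * j.choose m := by
  induction n with
  | zero => simp [stirling2]
  | succ n ih =>
    have key : ∀ m : ℕ, (stirling2 n m : ℝ) * m.factorial * j.choose m * j
        = (m : ℝ) * stirling2 n m * m.factorial * j.choose m
          + (stirling2 n m : ℝ) * (m + 1).factorial * j.choose (m + 1) := by
      intro m
      calc (stirling2 n m : ℝ) * m.factorial * j.choose m * j
          = (stirling2 n m : ℝ) * m.factorial * ((j : ℝ) * j.choose m) := by ring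
        _ = (stirling2 n m : ℝ) * m.factorial *
              ((m : ℝ) * j.choose m + ((m : ℝ) + 1) * j.choose (m + 1)) := by rw [jc j m]
        _ = _ := by rw [Nat.factorial_succ]; push_cast; ring
    rw [pow_succ, ih, Finset.sum_mul,
      Finset.sum_congr rfl fun m _ => key m, Finset.sum_add_distrib]
    have shift : ∑ m ∈ Finset.range (n + 1), (m : ℝ) * stirling2 n m * m.factorial * j.choose m
        = ∑ i ∈ Finset.range (n + 1),
            ((i : ℝ) + 1) * stirling2 n (i + 1) * (i + 1).factorial * j.choose (i + 1) := by
      rw [Finset.sum_range_succ'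
        (fun m => (m : ℝ) * stirling2 n m * m.factorial * j.choose m) n,
        Finset.sum_range_succ
        (fun i => ((i : ℝ) + 1) * stirling2 n (i + 1) * (i + 1).factorial * j.choose (i + 1)) n]
      push_cast
      rw [stirling2_eq_zero (Nat.lt_succ_self n)]
      push_cast
      ring
    rw [shift, Finset.sum_range_succ'
      (fun m => (stirling2 (n + 1) m : ℝ) * m.factorial * j.choose m) (n + 1),
      ← Finset.sum_add_distrib]
    have hterm : ∀ i ∈ Finset.range (n + 1),
        ((i : ℝ) + 1) * stirling2 n (i + 1) * (i + 1).factorial * j.choose (i + 1)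
          + (stirling2 n i : ℝ) * (i + 1).factorial * j.choose (i + 1)
        = (stirling2 (n + 1) (i + 1) : ℝ) * (i + 1).factorial * j.choose (i + 1) := by
      intro i _
      have hs : (stirling2 (n + 1) (i + 1) : ℝ)
          = ((i : ℝ) + 1) * stirling2 n (i + 1) + stirling2 n i := by
        show ((stirling2 (n + 1) (i + 1) : ℕ) : ℝ) = _
        rw [show stirling2 (n + 1) (i + 1) = (i + 1) * stirling2 n (i + 1) + stirling2 n i
          from rfl]
        push_cast; ring
      rw [hs]; ring
    rw [Finset.sum_congr rfl hterm]
    simp [show stirling2 (n + 1) 0 = 0 from rfl]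

lemma sum_shrink {f : ℕ → ℝ} {a b : ℕ} (hab : a ≤ b) (h : ∀ m, a < m → f m = 0) :
    ∑ m ∈ Finset.range (b + 1), f m = ∑ m ∈ Finset.range (a + 1), f m := by
  refine (Finset.sum_subset (Finset.range_subset_range.mpr (by omega)) ?_).symm
  intro x hx hnx
  simp only [Finset.mem_range] at hx hnx
  exact h x (by omega)

lemma neg_one_pow_sub (K i : ℕ) (h : i ≤ K) : ((-1 : ℝ)) ^ (K - i) = (-1) ^ (K + i) := by
  have hKi : K + i = (K - i) + 2 * i := by omega
  rw [hKi, pow_add, pow_mul]; simp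

lemma inner2 (k m : ℕ) (hm : m ≤ k) (x : ℝ) :
    ∑ j ∈ Finset.range (k + 1), (-1 : ℝ) ^ (k - j) * (k.choose j : ℝ) * (j.choose m : ℝ) * x ^ j
      = (k.choose m : ℝ) * x ^ m * (x - 1) ^ (k - m) := by
  have drop : ∑ j ∈ Finset.range (k + 1),
        (-1 : ℝ) ^ (k - j) * (k.choose j : ℝ) * (j.choose m : ℝ) * x ^ j
      = ∑ j ∈ Finset.Ico m (k + 1),
        (-1 : ℝ) ^ (k - j) * (k.choose j : ℝ) * (j.choose m : ℝ) * x ^ j := by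
    rw [Finset.range_eq_Ico]
    refine (Finset.sum_subset (Finset.Ico_subset_Ico (by omega) le_rfl) ?_).symm
    intro j hj hj2
    simp only [Finset.mem_Ico] at hj hj2
    have hjm : j < m := by omega
    simp [Nat.choose_eq_zero_of_lt hjm]
  rw [drop, Finset.sum_Ico_eq_sum_range, show k + 1 - m = (k - m) + 1 by omega]
  have hterm : ∀ i ∈ Finset.range (k - m + 1),
      (-1 : ℝ) ^ (k - (m + i)) * (k.choose (m + i) : ℝ) * ((m + i).choose m : ℝ) * x ^ (m + i)
        = (k.choose m : ℝ) * x ^ m *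
            ((-1 : ℝ) ^ ((k - m) - i) * ((k - m).choose i : ℝ) * x ^ i) := by
    intro i hi
    simp only [Finset.mem_range] at hi
    have h1 : m + i ≤ k := by omega
    have h2 : (k.choose (m + i) * (m + i).choose m : ℕ) = k.choose m * (k - m).choose i := by
      have := Nat.choose_mul (n := k) (Nat.le_add_right m i)
      simpa using this
    have h4 : (k.choose (m + i) : ℝ) * ((m + i).choose m : ℝ)
        = (k.choose m : ℝ) * ((k - m).choose i : ℝ) := by exact_mod_cast h2
    have h3 : k - (m + i) = (k - m) - i := by omega
    rw [h3, pow_add]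
    linear_combination ((-1 : ℝ) ^ (k - m - i) * x ^ m * x ^ i) * h4
  rw [Finset.sum_congr rfl hterm, ← Finset.mul_sum]
  have hsum : ∑ i ∈ Finset.range (k - m + 1),
      (-1 : ℝ) ^ ((k - m) - i) * ((k - m).choose i : ℝ) * x ^ i = (x - 1) ^ (k - m) := by
    rw [sub_pow]
    refine Finset.sum_congr rfl fun i hi => ?_
    simp only [Finset.mem_range] at hi
    rw [one_pow, neg_one_pow_sub (k - m) i (by omega)]
    ring
  rw [hsum]

lemma key_identity (n k : ℕ) (x : ℝ) :
    ∑ j ∈ Finset.range (k + 1), (-1 : ℝ) ^ (k - j) * (k.choose j : ℝ) * (j : ℝ) ^ n * x ^ j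
      = ∑ m ∈ Finset.range (k + 1),
          (stirling2 n m : ℝ) * m.factorial * (k.choose m : ℝ) * x ^ m * (x - 1) ^ (k - m) := by
  have expand : ∀ j ∈ Finset.range (k + 1),
      (-1 : ℝ) ^ (k - j) * (k.choose j : ℝ) * (j : ℝ) ^ n * x ^ j
        = ∑ m ∈ Finset.range (k + 1), (stirling2 n m : ℝ) * m.factorial *
            ((-1 : ℝ) ^ (k - j) * (k.choose j : ℝ) * (j.choose m : ℝ) * x ^ j) := by
    intro j hj
    simp only [Finset.mem_range] at hj
    have hj' : j ≤ k := by omega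
    have hzero : ∀ m, min n j < m →
        (stirling2 n m : ℝ) * m.factorial * (j.choose m : ℝ) = 0 := by
      intro m hm
      rcases min_lt_iff.mp hm with h | h
      · simp [stirling2_eq_zero h]
      · simp [Nat.choose_eq_zero_of_lt h]
    have hexp : (j : ℝ) ^ n = ∑ m ∈ Finset.range (k + 1),
        (stirling2 n m : ℝ) * m.factorial * (j.choose m : ℝ) := by
      rw [stirling_expand n j, sum_shrink (min_le_left n j) hzero,
        sum_shrink (le_trans (min_le_right n j) hj') hzero]
    rw [hexp, Finset.mul_sum, Finset.sum_mul]
    exact Finset.sum_congr rfl fun m _ => by ring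
  rw [Finset.sum_congr rfl expand, Finset.sum_comm]
  refine Finset.sum_congr rfl fun m hm => ?_
  simp only [Finset.mem_range] at hm
  rw [← Finset.mul_sum, inner2 k m (by omega) x]
  ring

lemma nu_eq (k n : ℕ) (p h : ℝ) :
    nuPMF k p h n = ∑ m ∈ Finset.range (k + 1),
      (stirling2 n m : ℝ) * m.factorial * (k.choose m : ℝ) * Real.exp ((1 - p) * h) ^ m *
        (Real.exp ((1 - p) * h) - 1) ^ (k - m) *
        ((p * h) ^ n / (n.factorial * (Real.exp h - 1) ^ k)) := by
  unfold nuPMF poisPMF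
  rw [Finset.mul_sum]
  have step : ∀ j ∈ Finset.range (k + 1),
      ((Real.exp h - 1) ^ k)⁻¹ * ((-1 : ℝ) ^ (k - j) * (k.choose j : ℝ) * Real.exp (j * h) *
          (Real.exp (-(p * j * h)) * (p * j * h) ^ n / n.factorial))
        = ((-1 : ℝ) ^ (k - j) * (k.choose j : ℝ) * (j : ℝ) ^ n * Real.exp ((1 - p) * h) ^ j) *
            ((p * h) ^ n / (n.factorial * (Real.exp h - 1) ^ k)) := by
    intro j _
    have e1 : Real.exp ((j : ℝ) * h) * Real.exp (-(p * j * h))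
        = Real.exp ((1 - p) * h) ^ j := by
      rw [← Real.exp_nat_mul, ← Real.exp_add]
      congr 1; ring
    have e2 : (p * (j : ℝ) * h) ^ n = (p * h) ^ n * (j : ℝ) ^ n := by
      rw [show p * (j : ℝ) * h = p * h * (j : ℝ) by ring, mul_pow]
    rw [← e1, e2]; ring
  rw [Finset.sum_congr rfl step, ← Finset.sum_mul, key_identity n k (Real.exp ((1 - p) * h)),
    Finset.sum_mul]

lemma nu_nonneg (k : ℕ) {p h : ℝ} (hp0 : 0 ≤ p) (hp1 : p ≤ 1) (hh : 0 < h) (n : ℕ) :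
    0 ≤ nuPMF k p h n := by
  rw [nu_eq]
  refine Finset.sum_nonneg fun m _ => ?_
  have h1 : (0 : ℝ) ≤ Real.exp ((1 - p) * h) - 1 :=
    sub_nonneg.mpr (Real.one_le_exp (mul_nonneg (by linarith) hh.le))
  have h2 : (0 : ℝ) ≤ Real.exp h - 1 := sub_nonneg.mpr (Real.one_le_exp hh.le)
  have hD : (0 : ℝ) ≤ (p * h) ^ n / (n.factorial * (Real.exp h - 1) ^ k) :=
    div_nonneg (pow_nonneg (by positivity) n)
      (mul_nonneg (Nat.cast_nonneg _) (pow_nonneg h2 k))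
  exact mul_nonneg (mul_nonneg (by positivity) (pow_nonneg h1 _)) hD

lemma summable_pois (r : ℝ) : Summable (poisPMF r) := by
  unfold poisPMF
  simp_rw [mul_div_assoc]
  exact (Real.summable_pow_div_factorial r).mul_left _

lemma tsum_pois (r : ℝ) : ∑' n : ℕ, poisPMF r n = 1 := by
  unfold poisPMF
  simp_rw [mul_div_assoc]
  rw [tsum_mul_left]
  have hexp : (∑' n : ℕ, r ^ n / n.factorial) = Real.exp r := by
    rw [Real.exp_eq_exp_ℝ, NormedSpace.exp_eq_tsum_div]
  rw [hexp, ← Real.exp_add]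
  simp

lemma summable_nu (k : ℕ) (p h : ℝ) : Summable (nuPMF k p h) := by
  have hsm : ∀ j ∈ Finset.range (k + 1), Summable (fun n : ℕ =>
      (-1 : ℝ) ^ (k - j) * (k.choose j : ℝ) * Real.exp ((j : ℝ) * h) *
        poisPMF (p * (j : ℝ) * h) n) := fun j _ =>
    (summable_pois (p * (j : ℝ) * h)).mul_left ((-1 : ℝ) ^ (k - j) * (k.choose j : ℝ) *
      Real.exp ((j : ℝ) * h))
  exact (summable_sum hsm).mul_left ((Real.exp h - 1) ^ k)⁻¹

lemma tsum_nu (k : ℕ) (p : ℝ) {h : ℝ} (hh : 0 < h) : ∑' n : ℕ, nuPMF k p h n = 1 := by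
  have hsm : ∀ j ∈ Finset.range (k + 1), Summable (fun n : ℕ =>
      (-1 : ℝ) ^ (k - j) * (k.choose j : ℝ) * Real.exp ((j : ℝ) * h) *
        poisPMF (p * (j : ℝ) * h) n) := fun j _ =>
    (summable_pois (p * (j : ℝ) * h)).mul_left ((-1 : ℝ) ^ (k - j) * (k.choose j : ℝ) *
      Real.exp ((j : ℝ) * h))
  have e := Summable.tsum_finsetSum (s := Finset.range (k + 1)) (f := fun (j : ℕ) (n : ℕ) =>
      (-1 : ℝ) ^ (k - j) * (k.choose j : ℝ) * Real.exp ((j : ℝ) * h) *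
        poisPMF (p * (j : ℝ) * h) n) hsm
  beta_reduce at e
  unfold nuPMF
  rw [tsum_mul_left, e]
  have hj : ∀ j ∈ Finset.range (k + 1),
      (∑' n : ℕ, (-1 : ℝ) ^ (k - j) * (k.choose j : ℝ) * Real.exp (j * h) * poisPMF (p * j * h) n)
        = (-1 : ℝ) ^ (k - j) * (k.choose j : ℝ) * Real.exp (j * h) := by
    intro j _
    rw [tsum_mul_left, tsum_pois, mul_one]
  rw [Finset.sum_congr rfl hj]
  have hsum : ∑ j ∈ Finset.range (k + 1),
      (-1 : ℝ) ^ (k - j) * (k.choose j : ℝ) * Real.exp ((j : ℝ) * h) = (Real.exp h - 1) ^ k := by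
    rw [sub_pow]
    refine Finset.sum_congr rfl fun j hj2 => ?_
    simp only [Finset.mem_range] at hj2
    rw [Real.exp_nat_mul, one_pow, neg_one_pow_sub k j (by omega)]
    ring
  rw [hsum, inv_mul_cancel₀ (pow_ne_zero _ (sub_ne_zero.mpr (Real.one_lt_exp_iff.mpr hh).ne'))]

lemma binom_zero {k n : ℕ} (p : ℝ) (h : k < n) : binomPMF k p n = 0 := by
  simp [binomPMF, Nat.not_le.mpr h]

lemma summable_binom (k : ℕ) (p : ℝ) : Summable (binomPMF k p) :=
  summable_of_ne_finset_zero (s := Finset.range (k + 1)) fun n hn =>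
    binom_zero p (by simpa using hn)

lemma sum_binom (k : ℕ) (p : ℝ) : ∑ n ∈ Finset.range (k + 1), binomPMF k p n = 1 := by
  calc ∑ n ∈ Finset.range (k + 1), binomPMF k p n
      = ∑ n ∈ Finset.range (k + 1), p ^ n * (1 - p) ^ (k - n) * (k.choose n : ℝ) := by
        refine Finset.sum_congr rfl fun n hn => ?_
        simp only [Finset.mem_range] at hn
        rw [binomPMF, if_pos (by omega)]
        ring
    _ = 1 := by rw [← add_pow, show p + (1 - p) = (1 : ℝ) by ring, one_pow]

lemma tendsto_exp_slope : Tendsto (fun h : ℝ => (Real.exp h - 1) / h) (𝓝[>] 0) (𝓝 1) := by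
  have h1 : HasDerivAt Real.exp 1 0 := by simpa using Real.hasDerivAt_exp 0
  have h2 := hasDerivAt_iff_tendsto_slope.mp h1
  have h3 : Tendsto (slope Real.exp 0) (𝓝[>] (0 : ℝ)) (𝓝 1) :=
    h2.mono_left (nhdsWithin_mono 0 fun x hx => ne_of_gt hx)
  refine h3.congr fun x => ?_
  simp [slope_def_field]

lemma tendsto_h_div : Tendsto (fun h : ℝ => h / (Real.exp h - 1)) (𝓝[>] 0) (𝓝 1) := by
  have h1 := tendsto_exp_slope.inv₀ one_ne_zero
  rw [inv_one] at h1
  refine h1.congr fun x => ?_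
  rw [inv_div]

lemma tendsto_ratio {c : ℝ} (hc : 0 ≤ c) :
    Tendsto (fun h : ℝ => (Real.exp (c * h) - 1) / (Real.exp h - 1)) (𝓝[>] 0) (𝓝 c) := by
  rcases eq_or_lt_of_le hc with rfl | hc'
  · simpa using (tendsto_const_nhds :
      Tendsto (fun _ : ℝ => (0 : ℝ)) (𝓝[>] 0) (𝓝 0))
  · have hcomp : Tendsto (fun h : ℝ => c * h) (𝓝[>] 0) (𝓝[>] 0) := by
      apply tendsto_nhdsWithin_of_tendsto_nhds_of_eventually_within
      · have h0 : Tendsto (fun h : ℝ => c * h) (𝓝 0) (𝓝 (c * 0)) :=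
          (continuous_const.mul continuous_id).tendsto 0
        simpa using h0.mono_left nhdsWithin_le_nhds
      · exact eventually_mem_nhdsWithin.mono fun x hx => mul_pos hc' hx
    have h1 : Tendsto (fun h : ℝ => (Real.exp (c * h) - 1) / (c * h)) (𝓝[>] 0) (𝓝 1) := by
      have := tendsto_exp_slope.comp hcomp
      exact this
    have h2 := (h1.mul tendsto_h_div).mul_const c
    rw [one_mul, one_mul] at h2
    refine Tendsto.congr' ?_ h2
    filter_upwards [eventually_mem_nhdsWithin] with x hx
    have hx0 : x ≠ 0 := ne_of_gt hx
    have hc0 : c ≠ 0 := ne_of_gt hc'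
    have hexp : Real.exp x - 1 ≠ 0 := sub_ne_zero.mpr (Real.one_lt_exp_iff.mpr hx).ne'
    field_simp

lemma nu_tendsto (k : ℕ) {p : ℝ} (hp0 : 0 ≤ p) (hp1 : p ≤ 1) {n : ℕ} (hn : n ≤ k) :
    Tendsto (fun h : ℝ => nuPMF k p h n) (𝓝[>] 0) (𝓝 (binomPMF k p n)) := by
  have hb : binomPMF k p n
      = ∑ m ∈ Finset.range (k + 1), (if m = n then binomPMF k p n else 0) := by
    rw [Finset.sum_ite_eq' (Finset.range (k + 1)) n fun _ => binomPMF k p n,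
      if_pos (Finset.mem_range.mpr (by omega))]
  rw [hb]
  simp only [nu_eq]
  apply tendsto_finset_sum
  intro m hm
  simp only [Finset.mem_range] at hm
  by_cases hmn : m ≤ n
  · have hc : (0 : ℝ) ≤ 1 - p := by linarith
    have hmk : m ≤ k := by omega
    set A : ℝ := (stirling2 n m : ℝ) * m.factorial * (k.choose m : ℝ) with hA
    have heq : ∀ᶠ h in 𝓝[>] (0 : ℝ),
        ((((A * Real.exp ((1 - p) * h) ^ m) *
            ((Real.exp ((1 - p) * h) - 1) / (Real.exp h - 1)) ^ (k - m)) *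
            (h / (Real.exp h - 1)) ^ m) * h ^ (n - m)) * (p ^ n / n.factorial)
        = (stirling2 n m : ℝ) * m.factorial * (k.choose m : ℝ) * Real.exp ((1 - p) * h) ^ m *
            (Real.exp ((1 - p) * h) - 1) ^ (k - m) *
            ((p * h) ^ n / (n.factorial * (Real.exp h - 1) ^ k)) := by
      filter_upwards [eventually_mem_nhdsWithin] with h hh
      have h2 : Real.exp h - 1 ≠ 0 := sub_ne_zero.mpr (Real.one_lt_exp_iff.mpr hh).ne'
      rw [mul_pow p h n, ← pow_sub_mul_pow h hmn, ← pow_sub_mul_pow (Real.exp h - 1) hmk, hA]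
      have hfac : ((n.factorial : ℝ)) ≠ 0 := Nat.cast_ne_zero.mpr n.factorial_ne_zero
      rw [div_pow, div_pow]
      field_simp
    have L1 : Tendsto (fun h : ℝ => Real.exp ((1 - p) * h) ^ m) (𝓝[>] 0) (𝓝 1) := by
      have hcont : Continuous fun h : ℝ => Real.exp ((1 - p) * h) ^ m := by continuity
      have := hcont.tendsto 0
      simp only [mul_zero, Real.exp_zero, one_pow] at this
      exact this.mono_left nhdsWithin_le_nhds
    have L2 : Tendsto (fun h : ℝ =>
          ((Real.exp ((1 - p) * h) - 1) / (Real.exp h - 1)) ^ (k - m)) (𝓝[>] 0)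
        (𝓝 ((1 - p) ^ (k - m))) := (tendsto_ratio hc).pow _
    have L3 : Tendsto (fun h : ℝ => (h / (Real.exp h - 1)) ^ m) (𝓝[>] 0) (𝓝 1) := by
      simpa using tendsto_h_div.pow m
    have L4 : Tendsto (fun h : ℝ => h ^ (n - m)) (𝓝[>] 0)
        (𝓝 (if m = n then 1 else 0)) := by
      rcases eq_or_lt_of_le hmn with rfl | hlt
      · simpa [Nat.sub_self] using (tendsto_const_nhds :
          Tendsto (fun _ : ℝ => (1 : ℝ)) (𝓝[>] 0) (𝓝 1))
      · have h5 : Tendsto (fun h : ℝ => h ^ (n - m)) (𝓝 0) (𝓝 ((0 : ℝ) ^ (n - m))) :=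
          (continuous_pow (n - m)).tendsto 0
        rw [zero_pow (show n - m ≠ 0 by omega)] at h5
        rw [if_neg (by omega)]
        exact h5.mono_left nhdsWithin_le_nhds
    have prod := (((((tendsto_const_nhds : Tendsto (fun _ : ℝ => A) (𝓝[>] 0) (𝓝 A)).mul
      L1).mul L2).mul L3).mul L4).mul_const (p ^ n / (n.factorial : ℝ))
    have final := Tendsto.congr' heq prod
    have hval : ((((A * 1) * (1 - p) ^ (k - m)) * 1) * (if m = n then 1 else 0)) *
        (p ^ n / (n.factorial : ℝ)) = (if m = n then binomPMF k p n else 0) := by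
      by_cases hmn2 : m = n
      · subst hmn2
        rw [if_pos rfl, if_pos rfl, hA, stirling2_self]
        rw [binomPMF, if_pos (by omega : m ≤ k)]
        have hfac : ((m.factorial : ℝ)) ≠ 0 := Nat.cast_ne_zero.mpr m.factorial_ne_zero
        field_simp
        ring
      · simp [hmn2]
    rw [← hval]
    exact final
  · have hz : (stirling2 n m : ℝ) = 0 := by
      exact_mod_cast congrArg (Nat.cast : ℕ → ℝ) (stirling2_eq_zero (by omega))
    rw [if_neg (by omega)]
    simp only [hz, zero_mul]
    exact tendsto_const_nhds

/-- For `k ∈ ℕ₀`, `0 ≤ p ≤ 1` and `h > 0`, the linear combination of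
Poisson distributions `ν_{k,p,h}` is a probability measure on `ℕ₀`; as `h → 0⁺` it
converges in total variation distance to the binomial distribution `Binom(k,p)`; for
`p = 1` its atoms are `ν_{k,1,h}(m) = h^m k! S(m,k) / ((e^h-1)^k m!)` with `S(m,k)` the
Stirling numbers of the second kind, so `ν_{k,1,h}` is supported on `{k, k+1, …}`. -/
theorem poisson_combination_approximates_binomial
    (k : ℕ) (p : ℝ) (hp0 : 0 ≤ p) (hp1 : p ≤ 1) :
    (∀ h : ℝ, 0 < h → (∀ n : ℕ, 0 ≤ nuPMF k p h n) ∧ (∑' n : ℕ, nuPMF k p h n) = 1) ∧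
    Tendsto (fun h : ℝ => (1 / 2 : ℝ) * ∑' n : ℕ, |nuPMF k p h n - binomPMF k p n|)
      (𝓝[>] (0 : ℝ)) (𝓝 0) ∧
    (∀ h : ℝ, 0 < h → ∀ m : ℕ,
      nuPMF k 1 h m =
        h ^ m * (k.factorial : ℝ) * (stirling2 m k : ℝ) /
          ((Real.exp h - 1) ^ k * m.factorial)) ∧
    (∀ h : ℝ, 0 < h → ∀ m : ℕ, m < k → nuPMF k 1 h m = 0) := by
  have part3 : ∀ h : ℝ, 0 < h → ∀ m : ℕ,
      nuPMF k 1 h m = h ^ m * (k.factorial : ℝ) * (stirling2 m k : ℝ) /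
        ((Real.exp h - 1) ^ k * m.factorial) := by
    intro h hh m
    rw [nu_eq k m 1 h]
    have hz : ∀ b ∈ Finset.range (k + 1), b ≠ k →
        (stirling2 m b : ℝ) * b.factorial * (k.choose b : ℝ) * Real.exp ((1 - 1) * h) ^ b *
          (Real.exp ((1 - 1) * h) - 1) ^ (k - b) *
          ((1 * h) ^ m / (m.factorial * (Real.exp h - 1) ^ k)) = 0 := by
      intro b hb hbk
      simp only [Finset.mem_range] at hb
      rw [show (1 - 1 : ℝ) * h = 0 by ring, Real.exp_zero, sub_self,
        zero_pow (show k - b ≠ 0 by omega)]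
      ring
    have hk : k ∉ Finset.range (k + 1) →
        (stirling2 m k : ℝ) * k.factorial * (k.choose k : ℝ) * Real.exp ((1 - 1) * h) ^ k *
          (Real.exp ((1 - 1) * h) - 1) ^ (k - k) *
          ((1 * h) ^ m / (m.factorial * (Real.exp h - 1) ^ k)) = 0 := by
      intro hk'
      exact absurd (Finset.self_mem_range_succ k) hk'
    rw [Finset.sum_eq_single k hz hk]
    rw [show (1 - 1 : ℝ) * h = 0 by ring, Real.exp_zero, sub_self, Nat.sub_self, pow_zero,
      Nat.choose_self, one_pow, one_mul, Nat.cast_one, mul_one, mul_one]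
    ring
  refine ⟨fun h hh => ⟨nu_nonneg k hp0 hp1 hh, tsum_nu k p hh⟩, ?_, part3, ?_⟩
  · have key2 : ∀ᶠ h in 𝓝[>] (0 : ℝ),
        (1 / 2 : ℝ) * ((∑ i ∈ Finset.range (k + 1), |nuPMF k p h i - binomPMF k p i|)
            + (1 - ∑ i ∈ Finset.range (k + 1), nuPMF k p h i))
          = (1 / 2 : ℝ) * ∑' n : ℕ, |nuPMF k p h n - binomPMF k p n| := by
      filter_upwards [eventually_mem_nhdsWithin] with h hh
      have hsummable : Summable fun n => |nuPMF k p h n - binomPMF k p n| :=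
        ((summable_nu k p h).sub (summable_binom k p)).abs
      have e3 : ∀ i : ℕ, |nuPMF k p h (i + (k + 1)) - binomPMF k p (i + (k + 1))|
          = nuPMF k p h (i + (k + 1)) := by
        intro i
        rw [binom_zero p (by omega), sub_zero, abs_of_nonneg (nu_nonneg k hp0 hp1 hh _)]
      have e4 : (∑' i : ℕ, nuPMF k p h (i + (k + 1)))
          = 1 - ∑ i ∈ Finset.range (k + 1), nuPMF k p h i := by
        have := (summable_nu k p h).sum_add_tsum_nat_add (k + 1)
        rw [tsum_nu k p hh] at this
        linarith
      rw [← hsummable.sum_add_tsum_nat_add (k + 1), tsum_congr e3, e4]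
    refine Tendsto.congr' key2 ?_
    have TS : Tendsto (fun h : ℝ =>
        (1 / 2 : ℝ) * ((∑ i ∈ Finset.range (k + 1), |nuPMF k p h i - binomPMF k p i|)
          + (1 - ∑ i ∈ Finset.range (k + 1), nuPMF k p h i))) (𝓝[>] 0)
        (𝓝 ((1 / 2 : ℝ) * ((∑ i ∈ Finset.range (k + 1), |binomPMF k p i - binomPMF k p i|)
          + (1 - ∑ i ∈ Finset.range (k + 1), binomPMF k p i)))) := by
      apply Tendsto.const_mul
      apply Tendsto.add
      · exact tendsto_finset_sum _ fun i hi =>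
          ((nu_tendsto k hp0 hp1 (by simp only [Finset.mem_range] at hi; omega)).sub
            tendsto_const_nhds).abs
      · exact tendsto_const_nhds.sub (tendsto_finset_sum _ fun i hi =>
          nu_tendsto k hp0 hp1 (by simp only [Finset.mem_range] at hi; omega))
    have hval : (1 / 2 : ℝ) * ((∑ i ∈ Finset.range (k + 1), |binomPMF k p i - binomPMF k p i|)
        + (1 - ∑ i ∈ Finset.range (k + 1), binomPMF k p i)) = 0 := by
      rw [sum_binom k p]
      simp
    rw [hval] at TS
    exact TS
  · intro h hh m hmk
    rw [part3 h hh m, stirling2_eq_zero hmk]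
    simp

end PoissonBump
end
end
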